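/- The 27 three-qutrit product states |0⟩|1⟩|η±⟩, |1⟩|η±⟩|0⟩, |η±⟩|0⟩|1⟩, |0⟩|2⟩|κ±⟩, |2⟩|κ±⟩|0⟩, |κ±⟩|0⟩|2⟩, |1⟩|2⟩|η±⟩, |2⟩|η±⟩|1⟩, |η±⟩|1⟩|2⟩, |2⟩|1⟩|κ±⟩, |1⟩|κ±⟩|2⟩, |κ±⟩|2⟩|1⟩, and |k⟩|k⟩|k⟩ for k ∈ {0,1,2}, form an orthonormal basis of ℂ³ ⊗ ℂ³ ⊗ ℂ³. -/

import Mathlib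

noncomputable section

abbrev V3 : Type := EuclideanSpace ℂ (Fin 3)
abbrev V333 : Type := EuclideanSpace ℂ (Fin 3 × Fin 3 × Fin 3)

def e3 (i : Fin 3) : V3 := EuclideanSpace.single i 1
def s2 : ℂ := Real.sqrt 2
def etaP : V3 := s2⁻¹ • (e3 0 + e3 1)
def etaM : V3 := s2⁻¹ • (e3 0 - e3 1)
def kapP : V3 := s2⁻¹ • (e3 0 + e3 2)
def kapM : V3 := s2⁻¹ • (e3 0 - e3 2)

/-- The tensor product `a ⊗ b ⊗ c ∈ (ℂ³)^⊗3`. -/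
def tp3 (a b c : V3) : V333 :=
  WithLp.toLp 2 (fun p : Fin 3 × Fin 3 × Fin 3 => a p.1 * b p.2.1 * c p.2.2)

/-- The basis `𝔹_II(b)(3,3)` of Halder et al. -/
def BIIb33 : Fin 27 → V333 :=
  ![tp3 (e3 0) (e3 1) etaP, tp3 (e3 0) (e3 1) etaM,
    tp3 (e3 1) etaP (e3 0), tp3 (e3 1) etaM (e3 0),
    tp3 etaP (e3 0) (e3 1), tp3 etaM (e3 0) (e3 1),
    tp3 (e3 0) (e3 2) kapP, tp3 (e3 0) (e3 2) kapM,
    tp3 (e3 2) kapP (e3 0), tp3 (e3 2) kapM (e3 0),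
    tp3 kapP (e3 0) (e3 2), tp3 kapM (e3 0) (e3 2),
    tp3 (e3 1) (e3 2) etaP, tp3 (e3 1) (e3 2) etaM,
    tp3 (e3 2) etaP (e3 1), tp3 (e3 2) etaM (e3 1),
    tp3 etaP (e3 1) (e3 2), tp3 etaM (e3 1) (e3 2),
    tp3 (e3 2) (e3 1) kapP, tp3 (e3 2) (e3 1) kapM,
    tp3 (e3 1) kapP (e3 2), tp3 (e3 1) kapM (e3 2),
    tp3 kapP (e3 2) (e3 1), tp3 kapM (e3 2) (e3 1),
    tp3 (e3 0) (e3 0) (e3 0), tp3 (e3 1) (e3 1) (e3 1), tp3 (e3 2) (e3 2) (e3 2)]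

@[simp] lemma BIIb33_0 (h : 0 < 27) : BIIb33 ⟨0, h⟩ = tp3 (e3 0) (e3 1) etaP := rfl
@[simp] lemma BIIb33_1 (h : 1 < 27) : BIIb33 ⟨1, h⟩ = tp3 (e3 0) (e3 1) etaM := rfl
@[simp] lemma BIIb33_2 (h : 2 < 27) : BIIb33 ⟨2, h⟩ = tp3 (e3 1) etaP (e3 0) := rfl
@[simp] lemma BIIb33_3 (h : 3 < 27) : BIIb33 ⟨3, h⟩ = tp3 (e3 1) etaM (e3 0) := rfl
@[simp] lemma BIIb33_4 (h : 4 < 27) : BIIb33 ⟨4, h⟩ = tp3 etaP (e3 0) (e3 1) := rfl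
@[simp] lemma BIIb33_5 (h : 5 < 27) : BIIb33 ⟨5, h⟩ = tp3 etaM (e3 0) (e3 1) := rfl
@[simp] lemma BIIb33_6 (h : 6 < 27) : BIIb33 ⟨6, h⟩ = tp3 (e3 0) (e3 2) kapP := rfl
@[simp] lemma BIIb33_7 (h : 7 < 27) : BIIb33 ⟨7, h⟩ = tp3 (e3 0) (e3 2) kapM := rfl
@[simp] lemma BIIb33_8 (h : 8 < 27) : BIIb33 ⟨8, h⟩ = tp3 (e3 2) kapP (e3 0) := rfl
@[simp] lemma BIIb33_9 (h : 9 < 27) : BIIb33 ⟨9, h⟩ = tp3 (e3 2) kapM (e3 0) := rfl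
@[simp] lemma BIIb33_10 (h : 10 < 27) : BIIb33 ⟨10, h⟩ = tp3 kapP (e3 0) (e3 2) := rfl
@[simp] lemma BIIb33_11 (h : 11 < 27) : BIIb33 ⟨11, h⟩ = tp3 kapM (e3 0) (e3 2) := rfl
@[simp] lemma BIIb33_12 (h : 12 < 27) : BIIb33 ⟨12, h⟩ = tp3 (e3 1) (e3 2) etaP := rfl
@[simp] lemma BIIb33_13 (h : 13 < 27) : BIIb33 ⟨13, h⟩ = tp3 (e3 1) (e3 2) etaM := rfl
@[simp] lemma BIIb33_14 (h : 14 < 27) : BIIb33 ⟨14, h⟩ = tp3 (e3 2) etaP (e3 1) := rfl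
@[simp] lemma BIIb33_15 (h : 15 < 27) : BIIb33 ⟨15, h⟩ = tp3 (e3 2) etaM (e3 1) := rfl
@[simp] lemma BIIb33_16 (h : 16 < 27) : BIIb33 ⟨16, h⟩ = tp3 etaP (e3 1) (e3 2) := rfl
@[simp] lemma BIIb33_17 (h : 17 < 27) : BIIb33 ⟨17, h⟩ = tp3 etaM (e3 1) (e3 2) := rfl
@[simp] lemma BIIb33_18 (h : 18 < 27) : BIIb33 ⟨18, h⟩ = tp3 (e3 2) (e3 1) kapP := rfl
@[simp] lemma BIIb33_19 (h : 19 < 27) : BIIb33 ⟨19, h⟩ = tp3 (e3 2) (e3 1) kapM := rfl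
@[simp] lemma BIIb33_20 (h : 20 < 27) : BIIb33 ⟨20, h⟩ = tp3 (e3 1) kapP (e3 2) := rfl
@[simp] lemma BIIb33_21 (h : 21 < 27) : BIIb33 ⟨21, h⟩ = tp3 (e3 1) kapM (e3 2) := rfl
@[simp] lemma BIIb33_22 (h : 22 < 27) : BIIb33 ⟨22, h⟩ = tp3 kapP (e3 2) (e3 1) := rfl
@[simp] lemma BIIb33_23 (h : 23 < 27) : BIIb33 ⟨23, h⟩ = tp3 kapM (e3 2) (e3 1) := rfl
@[simp] lemma BIIb33_24 (h : 24 < 27) : BIIb33 ⟨24, h⟩ = tp3 (e3 0) (e3 0) (e3 0) := rfl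
@[simp] lemma BIIb33_25 (h : 25 < 27) : BIIb33 ⟨25, h⟩ = tp3 (e3 1) (e3 1) (e3 1) := rfl
@[simp] lemma BIIb33_26 (h : 26 < 27) : BIIb33 ⟨26, h⟩ = tp3 (e3 2) (e3 2) (e3 2) := rfl

lemma conj_s2i : (starRingEnd ℂ) s2⁻¹ = s2⁻¹ := by simp [s2]

lemma s2_sq : s2 ^ 2 = 2 := by
  norm_num [s2, sq, ← Complex.ofReal_mul, Real.mul_self_sqrt]

@[simp] lemma inner_e3 (i j : Fin 3) : (inner ℂ (e3 i) (e3 j) : ℂ) = if i = j then 1 else 0 := by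
  fin_cases i <;> fin_cases j <;>
    simp [e3, PiLp.inner_apply, EuclideanSpace.single_apply, Fin.sum_univ_three]

lemma inner_tp3 (a b c a' b' c' : V3) :
    (inner ℂ (tp3 a b c) (tp3 a' b' c') : ℂ) = inner ℂ a a' * inner ℂ b b' * inner ℂ c c' := by
  simp only [PiLp.inner_apply, RCLike.inner_apply, tp3, PiLp.toLp_apply, map_mul,
    Fintype.sum_prod_type, Fin.sum_univ_three]
  ring

set_option maxHeartbeats 2000000 in
lemma BIIb33_on : Orthonormal ℂ BIIb33 := by
  rw [orthonormal_iff_ite]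
  intro i j
  fin_cases i <;> fin_cases j <;>
    · simp only [BIIb33_0, BIIb33_1, BIIb33_2, BIIb33_3, BIIb33_4, BIIb33_5, BIIb33_6,
        BIIb33_7, BIIb33_8, BIIb33_9, BIIb33_10, BIIb33_11, BIIb33_12, BIIb33_13, BIIb33_14,
        BIIb33_15, BIIb33_16, BIIb33_17, BIIb33_18, BIIb33_19, BIIb33_20, BIIb33_21, BIIb33_22,
        BIIb33_23, BIIb33_24, BIIb33_25, BIIb33_26, inner_tp3, etaP, etaM, kapP, kapM,
        inner_smul_left, inner_smul_right, inner_add_left, inner_add_right, inner_sub_left,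
        inner_sub_right, conj_s2i, inner_e3]
      norm_num [Fin.ext_iff]
      try (ring_nf; norm_num [s2_sq])

/-- the 27 product states of `𝔹_II(b)(3,3)` form an orthonormal basis of
`ℂ³ ⊗ ℂ³ ⊗ ℂ³`. -/
theorem BIIb33_orthonormal_basis :
    Orthonormal ℂ BIIb33 ∧ Submodule.span ℂ (Set.range BIIb33) = ⊤ := by
  refine ⟨BIIb33_on, ?_⟩
  apply LinearIndependent.span_eq_top_of_card_eq_finrank BIIb33_on.linearIndependent
  simp [finrank_euclideanSpace]
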